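/- For any finite family of vectors a₁,...,aₙ in ℝ² each of norm at most ε, there exists a choice of signs ε_i ∈ {1,-1} such that every partial sum satisfies ‖∑_{i<k} ε_i a_i‖ ≤ 7ε for all k ≤ n. -/

import Mathlib

open RealInnerProductSpace Finset
set_option maxHeartbeats 1000000

lemma norm2_coord (u : EuclideanSpace ℝ (Fin 2)) : ‖u‖^2 = u 0 ^ 2 + u 1 ^ 2 := by
  rw [EuclideanSpace.norm_eq, Real.sq_sqrt (by positivity)]
  simp [Fin.sum_univ_two, sq_abs]

lemma inner_coord (u v : EuclideanSpace ℝ (Fin 2)) : ⟪u, v⟫ = u 0 * v 0 + u 1 * v 1 := by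
  simp [PiLp.inner_apply, RCLike.inner_apply, Fin.sum_univ_two]
  ring

lemma three_vectors (u v w : EuclideanSpace ℝ (Fin 2)) :
    ‖u‖ * ‖v‖ ≤ 2 * |⟪u, v⟫| ∨ ‖u‖ * ‖w‖ ≤ 2 * |⟪u, w⟫| ∨ ‖v‖ * ‖w‖ ≤ 2 * |⟪v, w⟫| := by
  by_contra hcon
  push_neg at hcon
  obtain ⟨h1, h2, h3⟩ := hcon
  have sq1 : 4 * ⟪u, v⟫^2 < ‖u‖^2 * ‖v‖^2 := by
    have := mul_self_lt_mul_self (by positivity) h1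
    nlinarith [sq_abs (⟪u, v⟫)]
  have sq2 : 4 * ⟪u, w⟫^2 < ‖u‖^2 * ‖w‖^2 := by
    have := mul_self_lt_mul_self (by positivity) h2
    nlinarith [sq_abs (⟪u, w⟫)]
  have sq3 : 4 * ⟪v, w⟫^2 < ‖v‖^2 * ‖w‖^2 := by
    have := mul_self_lt_mul_self (by positivity) h3
    nlinarith [sq_abs (⟪v, w⟫)]
  have hvpos : 0 < ‖v‖^2 := by
    nlinarith [abs_nonneg (⟪u, v⟫), norm_nonneg u, norm_nonneg v, sq_nonneg (⟪u,v⟫)]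
  rw [norm2_coord, norm2_coord, inner_coord] at sq1
  rw [norm2_coord, norm2_coord, inner_coord] at sq2
  rw [norm2_coord, norm2_coord, inner_coord] at sq3
  rw [norm2_coord] at hvpos
  set u0 := u 0; set u1 := u 1; set v0 := v 0; set v1 := v 1; set w0 := w 0; set w1 := w 1
  set A := u0 * v0 + u1 * v1 with hA
  set B := u0 * v1 - u1 * v0 with hB
  set C := v0 * w0 + v1 * w1 with hC
  set D := v0 * w1 - v1 * w0 with hD
  set c3 := u0 * w0 + u1 * w1 with hc3
  set d3 := u0 * w1 - u1 * w0 with hd3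
  set N := v0^2 + v1^2 with hN
  have lag1 : (u0^2+u1^2) * N = A^2 + B^2 := by rw [hA, hB, hN]; ring
  have lag2 : (u0^2+u1^2) * (w0^2+w1^2) = c3^2 + d3^2 := by rw [hc3, hd3]; ring
  have lag3 : N * (w0^2+w1^2) = C^2 + D^2 := by rw [hC, hD, hN]; ring
  have hB2 : 3 * A^2 < B^2 := by linarith [sq1, lag1]
  have hD2 : 3 * C^2 < D^2 := by linarith [sq3, lag3]
  have hd32 : 3 * c3^2 < d3^2 := by linarith [sq2, lag2]
  have id1 : A * C - B * D = N * c3 := by rw [hA, hB, hC, hD, hN, hc3]; ring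
  have id2 : A * D + B * C = N * d3 := by rw [hA, hB, hC, hD, hN, hd3]; ring
  have key : 3 * (A*C - B*D)^2 < (A*D + B*C)^2 := by
    rw [id1, id2]
    have e1 : 3 * (N*c3)^2 = N^2 * (3 * c3^2) := by ring
    have e2 : (N*d3)^2 = N^2 * d3^2 := by ring
    rw [e1, e2]
    exact (mul_lt_mul_iff_right₀ (by positivity)).2 hd32
  nlinarith [mul_pos (by linarith : (0:ℝ) < B^2 - 3*A^2) (by linarith : (0:ℝ) < D^2 - 3*C^2),
    sq_nonneg (B*D - 3*A*C), sq_nonneg (A*D - B*C),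
    mul_nonneg (by linarith : (0:ℝ) ≤ B^2 - 3*A^2) (sq_nonneg C),
    mul_nonneg (by linarith : (0:ℝ) ≤ D^2 - 3*C^2) (sq_nonneg A)]

lemma merge_pair (ε : ℝ) (u v : EuclideanSpace ℝ (Fin 2)) (hu : ‖u‖ ≤ ε) (hv : ‖v‖ ≤ ε)
    (h : ‖u‖ * ‖v‖ ≤ 2 * |⟪u, v⟫|) :
    ∃ σ : ℝ, (σ = 1 ∨ σ = -1) ∧ ‖u + σ • v‖ ≤ ε := by
  have hε : 0 ≤ ε := le_trans (norm_nonneg u) hu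
  by_cases hc : 0 ≤ ⟪u, v⟫
  · refine ⟨-1, Or.inr rfl, ?_⟩
    have habs : |⟪u, v⟫| = ⟪u, v⟫ := abs_of_nonneg hc
    have hsq : ‖u + (-1 : ℝ) • v‖^2 ≤ ε^2 := by
      rw [@norm_add_sq_real, real_inner_smul_right, norm_smul]
      simp only [norm_neg, norm_one, one_mul]
      nlinarith [norm_nonneg u, norm_nonneg v,
        mul_nonneg (sub_nonneg.2 hu) (sub_nonneg.2 hv)]
    nlinarith [norm_nonneg (u + (-1 : ℝ) • v)]
  · push_neg at hc
    refine ⟨1, Or.inl rfl, ?_⟩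
    have habs : |⟪u, v⟫| = -⟪u, v⟫ := abs_of_neg hc
    have hsq : ‖u + (1 : ℝ) • v‖^2 ≤ ε^2 := by
      rw [@norm_add_sq_real, real_inner_smul_right, norm_smul]
      simp only [norm_one, one_mul]
      nlinarith [norm_nonneg u, norm_nonneg v,
        mul_nonneg (sub_nonneg.2 hu) (sub_nonneg.2 hv)]
    nlinarith [norm_nonneg (u + (1 : ℝ) • v)]

lemma pick_merge (ε : ℝ) (G : Fin 3 → EuclideanSpace ℝ (Fin 2)) (hG : ∀ b, ‖G b‖ ≤ ε) :
    ∃ b1 b2 : Fin 3, b1 ≠ b2 ∧ ∃ σ : ℝ, (σ = 1 ∨ σ = -1) ∧ ‖G b1 + σ • G b2‖ ≤ ε := by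
  rcases three_vectors (G 0) (G 1) (G 2) with h | h | h
  · exact ⟨0, 1, by decide, merge_pair ε _ _ (hG 0) (hG 1) h⟩
  · exact ⟨0, 2, by decide, merge_pair ε _ _ (hG 0) (hG 2) h⟩
  · exact ⟨1, 2, by decide, merge_pair ε _ _ (hG 1) (hG 2) h⟩

lemma pm_mul {x y : ℝ} (hx : x = 1 ∨ x = -1) (hy : y = 1 ∨ y = -1) :
    x * y = 1 ∨ x * y = -1 := by
  rcases hx with h | h <;> rcases hy with h' | h' <;> simp [h, h']

theorem stmt4 (n : ℕ) (a : Fin n → EuclideanSpace ℝ (Fin 2)) (ε : ℝ)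
    (hε : 0 < ε) (ha : ∀ i, ‖a i‖ ≤ ε) :
    ∃ s : Fin n → ℝ, (∀ i, s i = 1 ∨ s i = -1) ∧
      ∀ k ≤ n,
        ‖∑ i ∈ Finset.univ.filter (fun i : Fin n => (i : ℕ) < k), s i • a i‖ ≤ 7 * ε := by
  classical
  set c : ℕ → EuclideanSpace ℝ (Fin 2) := fun i => if h : i < n then a ⟨i, h⟩ else 0 with hc
  have hcε : ∀ i, ‖c i‖ ≤ ε := by
    intro i; rw [hc]; dsimp only; split
    · exact ha _
    · simpa using hε.le
  have main : ∀ k, ∃ t : ℕ → ℝ, ∃ γ : ℕ → Fin 3,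
      (∀ i, t i = 1 ∨ t i = -1) ∧
      (∀ b, ‖∑ i ∈ (Finset.range k).filter (fun i => γ i = b), t i • c i‖ ≤ ε) ∧
      (∀ j ≤ k, ∀ η : Fin 3 → ℝ, (∀ b, η b = 1 ∨ η b = -1) →
        ‖∑ i ∈ Finset.range j, (η (γ i) * t i) • c i‖ ≤ 3 * ε) := by
    intro k
    induction k with
    | zero =>
      refine ⟨fun _ => 1, fun _ => 0, fun _ => Or.inl rfl, by simp [hε.le], ?_⟩
      intro j hj η hη
      obtain rfl : j = 0 := Nat.le_zero.mp hj
      simp only [Finset.range_zero, Finset.sum_empty, norm_zero]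
      positivity
    | succ k ih =>
      obtain ⟨t, γ, ht, hG, hP⟩ := ih
      obtain ⟨b1, b2, hbne, σ, hσ, hmerge⟩ :=
        pick_merge ε (fun b => ∑ i ∈ (range k).filter (fun i => γ i = b), t i • c i) hG
      set t' : ℕ → ℝ := fun i => if i < k ∧ γ i = b2 then σ * t i else t i with ht'
      set γ' : ℕ → Fin 3 := fun i => if i < k ∧ γ i = b2 then b1
        else if i = k then b2 else γ i with hγ'
      have hγ'k : γ' k = b2 := by rw [hγ']; simp
      have ht'k : t' k = t k := by rw [ht']; simp
      have hγ'lt : ∀ i, i < k → γ' i = (if γ i = b2 then b1 else γ i) := by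
        intro i hik
        rw [hγ']; dsimp only
        by_cases hgi : γ i = b2
        · rw [if_pos ⟨hik, hgi⟩, if_pos hgi]
        · rw [if_neg (fun h => hgi h.2), if_neg (by omega), if_neg hgi]
      have ht'lt : ∀ i, i < k → t' i = (if γ i = b2 then σ * t i else t i) := by
        intro i hik
        rw [ht']; dsimp only
        by_cases hgi : γ i = b2
        · rw [if_pos ⟨hik, hgi⟩, if_pos hgi]
        · rw [if_neg (fun h => hgi h.2), if_neg hgi]
      have ht'pm : ∀ i, t' i = 1 ∨ t' i = -1 := by
        intro i; rw [ht']; dsimp only; split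
        · exact pm_mul hσ (ht i)
        · exact ht i
      have hG' : ∀ b, ‖∑ i ∈ (range (k+1)).filter (fun i => γ' i = b), t' i • c i‖ ≤ ε := by
        intro b
        rw [Finset.range_add_one, Finset.filter_insert]
        by_cases hb : b = b2
        · rw [if_pos (by rw [hγ'k, hb])]
          have hrest : (range k).filter (fun i => γ' i = b) = ∅ := by
            ext i
            simp only [mem_filter, mem_range, notMem_empty, iff_false, not_and]
            intro hik
            rw [hγ'lt i hik, hb]
            by_cases hgi : γ i = b2
            · rw [if_pos hgi]; exact hbne
            · rw [if_neg hgi]; exact hgi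
          rw [Finset.sum_insert (by simp), hrest, Finset.sum_empty, add_zero, ht'k, norm_smul]
          rcases ht k with h | h <;> rw [h] <;> simpa using hcε k
        · rw [if_neg (by rw [hγ'k]; exact fun h => hb h.symm)]
          by_cases hb1 : b = b1
          · have hf1 : (range k).filter (fun i => γ' i = b)
                = ((range k).filter (fun i => γ i = b1)) ∪ ((range k).filter (fun i => γ i = b2)) := by
              ext i
              simp only [mem_filter, mem_range, mem_union]
              constructor
              · rintro ⟨hik, hgb⟩
                rw [hγ'lt i hik] at hgb
                by_cases hgi : γ i = b2
                · exact Or.inr ⟨hik, hgi⟩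
                · rw [if_neg hgi] at hgb
                  exact Or.inl ⟨hik, by rw [hgb, hb1]⟩
              · rintro (⟨hik, hgi⟩ | ⟨hik, hgi⟩)
                · refine ⟨hik, ?_⟩
                  rw [hγ'lt i hik, if_neg (by rw [hgi]; exact fun h => hbne h), hgi, hb1]
                · exact ⟨hik, by rw [hγ'lt i hik, if_pos hgi, hb1]⟩
            have hdisj : Disjoint ((range k).filter (fun i => γ i = b1))
                ((range k).filter (fun i => γ i = b2)) := by
              rw [Finset.disjoint_left]
              intro i hi hi'
              rw [mem_filter] at hi hi'
              exact hbne (hi.2.symm.trans hi'.2)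
            rw [hf1, Finset.sum_union hdisj]
            have e1 : ∑ i ∈ (range k).filter (fun i => γ i = b1), t' i • c i
                = ∑ i ∈ (range k).filter (fun i => γ i = b1), t i • c i := by
              refine Finset.sum_congr rfl ?_
              intro i hi
              rw [mem_filter, mem_range] at hi
              rw [ht'lt i hi.1, if_neg (by rw [hi.2]; exact fun h => hbne h)]
            have e2 : ∑ i ∈ (range k).filter (fun i => γ i = b2), t' i • c i
                = σ • ∑ i ∈ (range k).filter (fun i => γ i = b2), t i • c i := by
              rw [Finset.smul_sum]
              refine Finset.sum_congr rfl ?_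
              intro i hi
              rw [mem_filter, mem_range] at hi
              rw [ht'lt i hi.1, if_pos hi.2, smul_smul]
            rw [e1, e2]
            exact hmerge
          · have hfe : (range k).filter (fun i => γ' i = b)
                = (range k).filter (fun i => γ i = b) := by
              ext i
              simp only [mem_filter, mem_range, and_congr_right_iff]
              intro hik
              rw [hγ'lt i hik]
              by_cases hgi : γ i = b2
              · rw [if_pos hgi]
                constructor
                · intro h; exact absurd h.symm hb1
                · intro h; rw [hgi] at h; exact absurd h.symm hb
              · rw [if_neg hgi]
            rw [hfe]
            have e3 : ∑ i ∈ (range k).filter (fun i => γ i = b), t' i • c i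
                = ∑ i ∈ (range k).filter (fun i => γ i = b), t i • c i := by
              refine Finset.sum_congr rfl ?_
              intro i hi
              rw [mem_filter, mem_range] at hi
              rw [ht'lt i hi.1, if_neg (by rw [hi.2]; exact fun h => hb h)]
            rw [e3]
            exact hG b
      refine ⟨t', γ', ht'pm, hG', ?_⟩
      intro j hj η hη
      by_cases hjk : j ≤ k
      · set η'' : Fin 3 → ℝ := fun b => if b = b2 then σ * η b1 else η b with hη''
        have hη''pm : ∀ b, η'' b = 1 ∨ η'' b = -1 := by
          intro b; rw [hη'']; dsimp only; split
          · exact pm_mul hσ (hη b1)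
          · exact hη b
        have heq : ∑ i ∈ Finset.range j, (η (γ' i) * t' i) • c i
            = ∑ i ∈ Finset.range j, (η'' (γ i) * t i) • c i := by
          refine Finset.sum_congr rfl ?_
          intro i hi
          rw [Finset.mem_range] at hi
          have hik : i < k := lt_of_lt_of_le hi hjk
          rw [hγ'lt i hik, ht'lt i hik, hη'']
          dsimp only
          by_cases hgi : γ i = b2
          · rw [if_pos hgi, if_pos hgi, if_pos hgi]
            congr 1
            ring
          · rw [if_neg hgi, if_neg hgi, if_neg hgi]
        rw [heq]
        exact hP j hjk η'' hη''pm
      · have hjeq : j = k + 1 := by omega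
        subst hjeq
        have hfib : ∑ i ∈ Finset.range (k+1), (η (γ' i) * t' i) • c i
            = ∑ b : Fin 3, η b • ∑ i ∈ (range (k+1)).filter (fun i => γ' i = b), t' i • c i := by
          rw [← Finset.sum_fiberwise (range (k+1)) (fun i => γ' i)
            (fun i => (η (γ' i) * t' i) • c i)]
          refine Finset.sum_congr rfl ?_
          intro b _
          rw [Finset.smul_sum]
          refine Finset.sum_congr rfl ?_
          intro i hi
          rw [mem_filter] at hi
          rw [hi.2, smul_smul]
        rw [hfib]
        calc ‖∑ b : Fin 3, η b • ∑ i ∈ (range (k+1)).filter (fun i => γ' i = b), t' i • c i‖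
            ≤ ∑ b : Fin 3, ‖η b • ∑ i ∈ (range (k+1)).filter (fun i => γ' i = b), t' i • c i‖ :=
              norm_sum_le _ _
          _ ≤ ∑ _b : Fin 3, ε := by
              refine Finset.sum_le_sum fun b _ => ?_
              rw [norm_smul]
              have hn1 : ‖η b‖ = 1 := by rcases hη b with h | h <;> rw [h] <;> simp
              rw [hn1, one_mul]
              exact hG' b
          _ = 3 * ε := by rw [Fin.sum_univ_three]; ring
  obtain ⟨t, γ, ht, -, hP⟩ := main n
  refine ⟨fun i => t i.1, fun i => ht i.1, ?_⟩
  intro k hk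
  have hbound := hP k hk (fun _ => 1) (fun _ => Or.inl rfl)
  simp only [one_mul] at hbound
  have hca : ∀ i : Fin n, c i.1 = a i := by
    intro i; rw [hc]; dsimp only; rw [dif_pos i.isLt]
  have heq : ∑ i ∈ Finset.univ.filter (fun i : Fin n => (i : ℕ) < k), t i.1 • a i
      = ∑ i ∈ Finset.range k, t i • c i := by
    rw [Finset.sum_filter]
    have e1 : ∀ i : Fin n, (if (i : ℕ) < k then t i.1 • a i else 0)
        = (if (i : ℕ) < k then t i.1 • c i.1 else 0) := by
      intro i; rw [hca]
    rw [Finset.sum_congr rfl (fun i _ => e1 i)]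
    rw [Fin.sum_univ_eq_sum_range (fun j => if j < k then t j • c j else 0) n]
    rw [← Finset.sum_filter]
    congr 1
    ext i
    simp only [mem_filter, mem_range]
    omega
  rw [heq]
  linarith
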